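/- Let n ≥ 3 be an integer. Then the function x ↦ sin(x)·cos(x)^{n−2} / (∫₀ˣ cos(t)^{n−1} dt) is non-increasing on (0, π/2), and the function x ↦ (∫₀ˣ sin(t)²·cos(t)^{n−3} dt) / (∫₀ˣ cos(t)^{n−1} dt) is non-decreasing on (0, π/2). -/

import Mathlib

open Real Set intervalIntegral MeasureTheory

private lemma myCos_pos {t x : ℝ} (ht0 : 0 ≤ t) (htx : t ≤ x) (hx : x < π/2) :
    0 < Real.cos t :=
  Real.cos_pos_of_mem_Ioo ⟨by nlinarith [Real.pi_pos], by linarith⟩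

private lemma myTan_sq (m : ℕ) {t x : ℝ} (ht0 : 0 ≤ t) (htx : t ≤ x) (hx : x < π/2) :
    Real.sin t ^ 2 * Real.cos t ^ m = Real.tan t ^ 2 * Real.cos t ^ (m+2) := by
  have hc : 0 < Real.cos t := myCos_pos ht0 htx hx
  rw [Real.tan_eq_sin_div_cos]
  field_simp
  ring

private lemma myTan_le {t x : ℝ} (ht0 : 0 ≤ t) (htx : t ≤ x) (hx0 : 0 ≤ x) (hx : x < π/2) :
    Real.tan t ≤ Real.tan x := by
  have h1 : t ∈ Set.Ioo (-(π/2)) (π/2) := ⟨by nlinarith [Real.pi_pos], by linarith⟩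
  have h2 : x ∈ Set.Ioo (-(π/2)) (π/2) := ⟨by nlinarith [Real.pi_pos], hx⟩
  exact Real.strictMonoOn_tan.monotoneOn h1 h2 htx

private lemma myTan_nonneg {t : ℝ} (ht0 : 0 ≤ t) (ht : t < π/2) : 0 ≤ Real.tan t := by
  rw [Real.tan_eq_sin_div_cos]
  exact div_nonneg (Real.sin_nonneg_of_nonneg_of_le_pi ht0 (by nlinarith [Real.pi_pos]))
    (myCos_pos ht0 le_rfl ht).le

/-- integration by parts identity -/
private lemma myIdent (m : ℕ) (x : ℝ) :
    (∫ t in (0:ℝ)..x, Real.cos t ^ (m+2)) =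
      Real.sin x * Real.cos x ^ (m+1) +
        (m+1) * ∫ t in (0:ℝ)..x, Real.sin t ^ 2 * Real.cos t ^ m := by
  set F : ℝ → ℝ := fun x => ∫ t in (0:ℝ)..x, Real.sin t ^ 2 * Real.cos t ^ m with hF
  set G : ℝ → ℝ := fun x => ∫ t in (0:ℝ)..x, Real.cos t ^ (m+2) with hG
  have hcontf : Continuous (fun t => Real.sin t ^ 2 * Real.cos t ^ m) := by continuity
  have hcontg : Continuous (fun t => Real.cos t ^ (m+2)) := by continuity
  set H : ℝ → ℝ := fun x => Real.sin x * Real.cos x ^ (m+1) + (m+1) * F x - G x with hH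
  have hderiv : ∀ y : ℝ, HasDerivAt H 0 y := by
    intro y
    have h1 : HasDerivAt (fun x => Real.sin x * Real.cos x ^ (m+1))
        (Real.cos y * Real.cos y ^ (m+1) +
          Real.sin y * ((m+1 : ℕ) * Real.cos y ^ m * (-Real.sin y))) y :=
      (Real.hasDerivAt_sin y).mul ((Real.hasDerivAt_cos y).pow (m+1))
    have h2 : HasDerivAt F (Real.sin y ^ 2 * Real.cos y ^ m) y :=
      (hcontf.integral_hasStrictDerivAt 0 y).hasDerivAt
    have h3 : HasDerivAt G (Real.cos y ^ (m+2)) y :=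
      (hcontg.integral_hasStrictDerivAt 0 y).hasDerivAt
    have := (h1.add (h2.const_mul ((m:ℝ)+1))).sub h3
    convert this using 1
    · rfl
    · rfl
    · rfl
    push_cast
    ring_nf
  have hc : ∀ y : ℝ, H y = H 0 := by
    intro y
    exact is_const_of_deriv_eq_zero (fun y => (hderiv y).differentiableAt)
      (fun y => (hderiv y).deriv) y 0
  have h0 : H 0 = 0 := by simp [hH, hF, hG]
  have := (hc x).trans h0
  simp only [hH] at this
  linarith

theorem sin_cos_ratio_monotone (n : ℕ) (hn : 3 ≤ n) :
    AntitoneOn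
        (fun x : ℝ => Real.sin x * Real.cos x ^ (n - 2) /
          ∫ t in (0 : ℝ)..x, Real.cos t ^ (n - 1))
        (Set.Ioo 0 (Real.pi / 2)) ∧
      MonotoneOn
        (fun x : ℝ => (∫ t in (0 : ℝ)..x, Real.sin t ^ 2 * Real.cos t ^ (n - 3)) /
          ∫ t in (0 : ℝ)..x, Real.cos t ^ (n - 1))
        (Set.Ioo 0 (Real.pi / 2)) := by
  obtain ⟨m, rfl⟩ := Nat.exists_eq_add_of_le hn
  have e1 : 3 + m - 1 = m + 2 := by omega
  have e2 : 3 + m - 2 = m + 1 := by omega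
  have e3 : 3 + m - 3 = m := by omega
  simp only [e1, e2, e3]
  set F : ℝ → ℝ := fun x => ∫ t in (0:ℝ)..x, Real.sin t ^ 2 * Real.cos t ^ m with hF
  set G : ℝ → ℝ := fun x => ∫ t in (0:ℝ)..x, Real.cos t ^ (m+2) with hG
  have hcontf : Continuous (fun t => Real.sin t ^ 2 * Real.cos t ^ m) := by continuity
  have hcontg : Continuous (fun t => Real.cos t ^ (m+2)) := by continuity
  -- positivity of G
  have hGpos : ∀ x ∈ Set.Ioo (0:ℝ) (π/2), 0 < G x := by
    rintro x ⟨hx0, hx2⟩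
    refine intervalIntegral.intervalIntegral_pos_of_pos_on
      (hcontg.intervalIntegrable 0 x) (fun t ht => ?_) hx0
    exact pow_pos (myCos_pos ht.1.le ht.2.le hx2) _
  -- main monotone claim
  have hmono : MonotoneOn (fun x => F x / G x) (Set.Ioo 0 (π/2)) := by
    rintro x ⟨hx0, hx2⟩ y ⟨hy0, hy2⟩ hxy
    rcases hxy.eq_or_lt with rfl | hlt
    · exact le_rfl
    rw [div_le_div_iff₀ (hGpos x ⟨hx0, hx2⟩) (hGpos y ⟨hy0, hy2⟩)]
    have hFsplit : F y = F x + ∫ t in x..y, Real.sin t ^ 2 * Real.cos t ^ m :=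
      (intervalIntegral.integral_add_adjacent_intervals
        (hcontf.intervalIntegrable 0 x) (hcontf.intervalIntegrable x y)).symm
    have hGsplit : G y = G x + ∫ t in x..y, Real.cos t ^ (m+2) :=
      (intervalIntegral.integral_add_adjacent_intervals
        (hcontg.intervalIntegrable 0 x) (hcontg.intervalIntegrable x y)).symm
    -- F x ≤ tan x ^ 2 * G x
    have key1 : F x ≤ Real.tan x ^ 2 * G x := by
      have : F x ≤ ∫ t in (0:ℝ)..x, Real.tan x ^ 2 * Real.cos t ^ (m+2) := by
        apply intervalIntegral.integral_mono_on hx0.le (hcontf.intervalIntegrable 0 x)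
          ((continuous_const.mul hcontg).intervalIntegrable 0 x)
        intro t ⟨ht0, htx⟩
        rw [myTan_sq m ht0 htx hx2]
        have htan : 0 ≤ Real.tan t := myTan_nonneg ht0 (lt_of_le_of_lt htx hx2)
        have h2 : Real.tan t ≤ Real.tan x := myTan_le ht0 htx hx0.le hx2
        have := pow_le_pow_left₀ htan h2 2
        exact mul_le_mul_of_nonneg_right this (pow_nonneg (myCos_pos ht0 htx hx2).le _)
      rwa [intervalIntegral.integral_const_mul] at this
    -- tan x ^ 2 * ∫ₓʸ g ≤ ∫ₓʸ f
    have key2 : Real.tan x ^ 2 * (∫ t in x..y, Real.cos t ^ (m+2)) ≤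
        ∫ t in x..y, Real.sin t ^ 2 * Real.cos t ^ m := by
      rw [← intervalIntegral.integral_const_mul]
      apply intervalIntegral.integral_mono_on hlt.le
        ((continuous_const.mul hcontg).intervalIntegrable x y)
        (hcontf.intervalIntegrable x y)
      intro t ⟨htx, hty⟩
      have ht2 : t < π/2 := lt_of_le_of_lt hty hy2
      rw [myTan_sq m (hx0.le.trans htx) hty hy2]
      have htan : 0 ≤ Real.tan x := myTan_nonneg hx0.le hx2
      have h2 : Real.tan x ≤ Real.tan t := myTan_le hx0.le htx (hx0.le.trans htx) ht2
      have := pow_le_pow_left₀ htan h2 2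
      exact mul_le_mul_of_nonneg_right this
        (pow_nonneg (myCos_pos (hx0.le.trans htx) hty hy2).le _)
    have hIg : 0 ≤ ∫ t in x..y, Real.cos t ^ (m+2) := by
      apply intervalIntegral.integral_nonneg hlt.le
      intro t ⟨ht0, ht1⟩
      exact pow_nonneg (myCos_pos (hx0.le.trans ht0) ht1 hy2).le _
    have hGx := hGpos x ⟨hx0, hx2⟩
    rw [hFsplit, hGsplit]
    nlinarith [mul_le_mul_of_nonneg_right key1 hIg, mul_le_mul_of_nonneg_left key2 hGx.le]
  refine ⟨?_, hmono⟩
  have hrw : ∀ x ∈ Set.Ioo (0:ℝ) (π/2),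
      Real.sin x * Real.cos x ^ (m+1) / G x = 1 - ((m:ℝ)+1) * (F x / G x) := by
    intro x hx
    have hGx := hGpos x hx
    have hid := myIdent m x
    rw [show (∫ t in (0:ℝ)..x, Real.cos t ^ (m+2)) = G x from rfl,
      show (∫ t in (0:ℝ)..x, Real.sin t ^ 2 * Real.cos t ^ m) = F x from rfl] at hid
    field_simp
    push_cast at hid ⊢
    linarith
  intro x hx y hy hxy
  simp only
  rw [hrw x hx, hrw y hy]
  have := hmono hx hy hxy
  have hm1 : (0:ℝ) ≤ (m:ℝ)+1 := by positivity
  nlinarith
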